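/- For real numbers a, b, c, d and p ≥ 1, it holds that |max{a,b} − max{c,d}|^p + |min{a,b} − min{c,d}|^p ≤ |a − c|^p + |b − d|^p. -/

import Mathlib

private lemma abs_rpow_combo {p : ℝ} (hp : 1 ≤ p) {l m x y : ℝ} (hl : 0 ≤ l) (hm : 0 ≤ m)
    (hlm : l + m = 1) : |l * x + m * y| ^ p ≤ l * |x| ^ p + m * |y| ^ p := by
  have h1 : |l * x + m * y| ≤ l * |x| + m * |y| := by
    calc |l * x + m * y| ≤ |l * x| + |m * y| := abs_add_le _ _
    _ = l * |x| + m * |y| := by rw [abs_mul, abs_mul, abs_of_nonneg hl, abs_of_nonneg hm]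
  have h2 : |l * x + m * y| ^ p ≤ (l * |x| + m * |y|) ^ p :=
    Real.rpow_le_rpow (abs_nonneg _) h1 (le_trans zero_le_one hp)
  refine h2.trans ?_
  have := (convexOn_rpow hp).2 (x := |x|) (y := |y|) (abs_nonneg x) (abs_nonneg y) hl hm hlm
  simpa using this

private lemma pair_ineq {p : ℝ} (hp : 1 ≤ p) {x y x' y' : ℝ} (hsum : x' + y' = x + y)
    (h1 : y ≤ x') (h2 : x' ≤ x) : |x'| ^ p + |y'| ^ p ≤ |x| ^ p + |y| ^ p := by
  rcases eq_or_lt_of_le (h1.trans h2) with h | h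
  · have hx' : x' = x := le_antisymm h2 (h ▸ h1)
    have hy' : y' = y := by linarith
    rw [hx', hy']
  · set l : ℝ := (x' - y) / (x - y) with hl
    have hxy : 0 < x - y := by linarith
    have hl0 : 0 ≤ l := div_nonneg (by linarith) hxy.le
    have hl1 : l ≤ 1 := by rw [div_le_one hxy]; linarith
    have hm0 : 0 ≤ 1 - l := by linarith
    have hx'e : x' = l * x + (1 - l) * y := by rw [hl]; field_simp [hxy.ne']; ring
    have hy'e : y' = (1 - l) * x + l * y := by
      have : y' = x + y - x' := by linarith
      rw [this, hx'e]; ring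
    calc |x'| ^ p + |y'| ^ p
        ≤ (l * |x| ^ p + (1 - l) * |y| ^ p) + ((1 - l) * |x| ^ p + l * |y| ^ p) := by
          gcongr ?_ + ?_
          · rw [hx'e]; exact abs_rpow_combo hp hl0 hm0 (by ring)
          · rw [hy'e]; exact abs_rpow_combo hp hm0 hl0 (by ring)
      _ = |x| ^ p + |y| ^ p := by ring

private lemma key {p : ℝ} (hp : 1 ≤ p) {a b c d : ℝ} (hab : b ≤ a) (hcd : c ≤ d) :
    |a - d| ^ p + |b - c| ^ p ≤ |a - c| ^ p + |b - d| ^ p :=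
  pair_ineq hp (x := a - c) (y := b - d) (by ring) (by linarith) (by linarith)

/-- for `p ≥ 1`,
`|max a b − max c d|^p + |min a b − min c d|^p ≤ |a−c|^p + |b−d|^p`. -/
theorem stmt5 (a b c d p : ℝ) (hp : 1 ≤ p) :
    |max a b - max c d| ^ p + |min a b - min c d| ^ p ≤ |a - c| ^ p + |b - d| ^ p := by
  rcases le_total a b with hab | hab <;> rcases le_total c d with hcd | hcd
  · rw [max_eq_right hab, max_eq_right hcd, min_eq_left hab, min_eq_left hcd, add_comm]
  · rw [max_eq_right hab, max_eq_left hcd, min_eq_left hab, min_eq_right hcd]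
    have := key hp (a := b) (b := a) (c := d) (d := c) hab hcd
    linarith
  · rw [max_eq_left hab, max_eq_right hcd, min_eq_right hab, min_eq_left hcd]
    exact key hp hab hcd
  · rw [max_eq_left hab, max_eq_left hcd, min_eq_right hab, min_eq_right hcd]
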